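/- Under the hypotheses of the algorithm's output F*, the 'overlap' contribution at any point x_i is bounded: sum_{x_j in F*} max(0, r_j - D(x_j, x_i)) <= c_0 * r̄_i, where c_0 = 1 + 1/sqrt(2). -/
import Mathlib


open Finset

/-- The overlap contribution at any point `xᵢ` is bounded:
`∑_{xⱼ ∈ F*} max(0, rⱼ - D(xⱼ,xᵢ)) ≤ c₀ * r̄ᵢ` with `c₀ = 1 + 1/√2`. -/
theorem overlap_contribution_bound {X : Type*} [Fintype X] [Nonempty X] [MetricSpace X]
    (r : X → ℝ) (hr : ∀ i, 0 ≤ r i)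
    (c0 : ℝ) (hc0 : c0 = 1 + 1/Real.sqrt 2)
    (rb : X → ℝ)
    (hrb : ∀ i, rb i = univ.inf' univ_nonempty (fun j => dist i j + r j))
    (V : X → ℕ)
    (hVr : ∀ a b : X, c0 * r a < r b → V a < V b)
    (F : Finset X) (i : X)
    (ha : ∀ j ∈ F, ∀ l ∈ F, dist j i ≤ r j → dist l i ≤ r l → j = l)
    (hb : ∀ j ∈ F, dist j i ≤ r j → r j < c0 * r i)
    (hc : ∀ j ∈ F, ∀ i' : X, V i' < V j → dist j i' > 2 * r j) :
    ∑ j ∈ F, max 0 (r j - dist j i) ≤ c0 * rb i := by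
  have hc0_ge1 : (1 : ℝ) ≤ c0 := by
    rw [hc0]
    have : 0 ≤ 1 / Real.sqrt 2 := by positivity
    linarith
  have hc0_nonneg : 0 ≤ c0 := le_trans zero_le_one hc0_ge1
  have hrb_nonneg : 0 ≤ rb i := by
    rw [hrb]
    apply Finset.le_inf'
    intro j _
    have := hr j
    have := dist_nonneg (x := i) (y := j)
    linarith
  obtain ⟨k, -, hk⟩ := Finset.exists_mem_eq_inf' (univ_nonempty (α := X))
      (fun j => dist i j + r j)
  have hrbk : rb i = dist i k + r k := by rw [hrb]; exact hk
  by_cases hcov : ∃ j ∈ F, dist j i ≤ r j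
  · obtain ⟨j0, hj0F, hj0⟩ := hcov
    have hsum : ∑ j ∈ F, max 0 (r j - dist j i) = max 0 (r j0 - dist j0 i) := by
      apply Finset.sum_eq_single_of_mem _ hj0F
      intro l hlF hlne
      have : ¬ dist l i ≤ r l := fun h => hlne (ha l hlF j0 hj0F h hj0)
      have : r l - dist l i ≤ 0 := by linarith [not_le.mp this]
      exact max_eq_left this
    rw [hsum]
    by_cases hV : V k < V j0
    · have hd : dist j0 k > 2 * r j0 := hc j0 hj0F k hV
      have htri : dist j0 k ≤ dist j0 i + dist i k := dist_triangle j0 i k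
      have h1 : max 0 (r j0 - dist j0 i) ≤ rb i := by
        rw [hrbk]
        have := hr k
        have := hr j0
        apply max_le <;> linarith
      calc max 0 (r j0 - dist j0 i) ≤ rb i := h1
        _ = 1 * rb i := (one_mul _).symm
        _ ≤ c0 * rb i := by nlinarith
    · have hle : r j0 ≤ c0 * r k := by
        by_contra h
        exact hV (hVr k j0 (not_le.mp h))
      have hdn : 0 ≤ dist j0 i := dist_nonneg
      have hdn2 : 0 ≤ dist i k := dist_nonneg
      have : r j0 - dist j0 i ≤ c0 * rb i := by
        rw [hrbk]; nlinarith
      exact max_le (by positivity) this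
  · push_neg at hcov
    have hsum : ∑ j ∈ F, max 0 (r j - dist j i) = 0 := by
      apply Finset.sum_eq_zero
      intro l hl
      have := hcov l hl
      exact max_eq_left (by linarith)
    rw [hsum]
    positivity
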